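/- Let m, n be positive integers with m ≥ 2, let G = C_m ⊕ C_{mn}, and let {g_1, g_2} be a generating set of G consisting of two distinct elements with ord(g_2) = mn. Then the sequence S = g_1^{m-1} · g_2^{mn-1} · (−g_1 + g_2)^{m-1} has length 2m + mn − 3 (which equals η(G) − 1) and has no short zero-sum subsequence. -/

import Mathlib

lemma multiset_split {α : Type*} [DecidableEq α] {T A B : Multiset α} (h : T ≤ A + B) :
    ∃ a b, a ≤ A ∧ b ≤ B ∧ T = a + b :=
  ⟨T - B, T ∩ B, Multiset.sub_le_iff_le_add.2 h, Multiset.inter_le_right,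
    (Multiset.sub_add_inter T B).symm⟩

theorem stmt_1 (m n : ℕ) (hm : 2 ≤ m) (hn : 0 < n)
    (g1 g2 : ZMod m × ZMod (m * n)) (hne : g1 ≠ g2)
    (hg2 : addOrderOf g2 = m * n)
    (hgen : AddSubgroup.closure ({g1, g2} : Set (ZMod m × ZMod (m * n))) = ⊤) :
    (Multiset.replicate (m - 1) g1 + Multiset.replicate (m * n - 1) g2 +
        Multiset.replicate (m - 1) (-g1 + g2)).card = 2 * m + m * n - 3 ∧
    ¬ ∃ T ≤ Multiset.replicate (m - 1) g1 + Multiset.replicate (m * n - 1) g2 +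
        Multiset.replicate (m - 1) (-g1 + g2),
        T ≠ 0 ∧ T.sum = 0 ∧ Multiset.card T ≤ m * n := by
  have hmn : 0 < m * n := Nat.mul_pos (by omega) hn
  have hmle : m ≤ m * n := Nat.le_mul_of_pos_right m hn
  constructor
  · simp only [Multiset.card_add, Multiset.card_replicate]
    omega
  rintro ⟨T, hT, hT0, hTsum, hTcard⟩
  set q : (ZMod m × ZMod (m * n)) →+
      (ZMod m × ZMod (m * n)) ⧸ AddSubgroup.zmultiples g2 :=
    QuotientAddGroup.mk' (AddSubgroup.zmultiples g2) with hqdef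
  have hq : Function.Surjective q := QuotientAddGroup.mk'_surjective _
  have hqg2 : q g2 = 0 := (QuotientAddGroup.eq_zero_iff g2).2 (AddSubgroup.mem_zmultiples g2)
  have hgen' : ∀ x : (ZMod m × ZMod (m * n)) ⧸ AddSubgroup.zmultiples g2,
      x ∈ AddSubgroup.zmultiples (q g1) := by
    intro x
    have h1 : AddSubgroup.closure (q '' {g1, g2}) = ⊤ := by
      rw [← AddMonoidHom.map_closure, hgen]
      exact AddSubgroup.map_top_of_surjective q hq
    have h2 : q '' {g1, g2} ⊆
        (AddSubgroup.zmultiples (q g1) : Set ((ZMod m × ZMod (m * n)) ⧸ AddSubgroup.zmultiples g2)) := by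
      rw [Set.image_insert_eq, Set.image_singleton, hqg2]
      rintro y (rfl | rfl)
      · exact AddSubgroup.mem_zmultiples _
      · exact zero_mem _
    have h3 := (AddSubgroup.closure_le _).2 h2
    rw [h1] at h3
    exact h3 (AddSubgroup.mem_top x)
  have hcardG : Nat.card (ZMod m × ZMod (m * n)) = m * (m * n) := by
    simp [Nat.card_prod, Nat.card_zmod]
  have hcardH : Nat.card (AddSubgroup.zmultiples g2) = m * n := by
    rw [Nat.card_zmultiples, hg2]
  have hcardQ : Nat.card ((ZMod m × ZMod (m * n)) ⧸ AddSubgroup.zmultiples g2) = m := by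
    have h4 := AddSubgroup.card_eq_card_quotient_mul_card_addSubgroup
      (AddSubgroup.zmultiples g2)
    rw [hcardG, hcardH] at h4
    exact (Nat.eq_of_mul_eq_mul_right hmn h4.symm)
  have hord : addOrderOf (q g1) = m := by
    rw [addOrderOf_eq_card_of_forall_mem_zmultiples hgen', hcardQ]
  obtain ⟨D, C, hD, hC, rfl⟩ := multiset_split hT
  obtain ⟨A, B, hA, hB, rfl⟩ := multiset_split hD
  obtain ⟨a, ha, rfl⟩ := Multiset.le_replicate_iff.1 hA
  obtain ⟨b, hb, rfl⟩ := Multiset.le_replicate_iff.1 hB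
  obtain ⟨c, hc, rfl⟩ := Multiset.le_replicate_iff.1 hC
  rw [Multiset.sum_add, Multiset.sum_add, Multiset.sum_replicate, Multiset.sum_replicate,
    Multiset.sum_replicate] at hTsum
  have hcard : a + b + c ≤ m * n := by
    simpa [Multiset.card_replicate] using hTcard
  have hne0 : a + b + c ≠ 0 := by
    intro h
    obtain ⟨rfl, rfl, rfl⟩ : a = 0 ∧ b = 0 ∧ c = 0 := by omega
    simp at hT0
  have hz : (a : ℤ) • g1 + (b : ℤ) • g2 + (c : ℤ) • (-g1 + g2) = 0 := by
    simpa [natCast_zsmul] using hTsum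
  have key : ((a : ℤ) - c) • g1 = (-(b : ℤ) - c) • g2 := by
    rw [smul_add, smul_neg] at hz
    rw [sub_smul, sub_smul, neg_smul]
    linear_combination (norm := abel) hz
  have hmem : ((a : ℤ) - c) • g1 ∈ AddSubgroup.zmultiples g2 := by
    rw [key]
    exact AddSubgroup.zsmul_mem _ (AddSubgroup.mem_zmultiples g2) _
  have hdvd : (m : ℤ) ∣ ((a : ℤ) - c) := by
    rw [← hord, addOrderOf_dvd_iff_zsmul_eq_zero, ← map_zsmul q]
    exact (QuotientAddGroup.eq_zero_iff _).2 hmem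
  have hac : a = c := by
    have h5 := Int.eq_zero_of_dvd_of_natAbs_lt_natAbs hdvd ?_
    · omega
    · simp only [Int.natAbs_natCast]
      omega
  subst hac
  have hsum2 : (b + a) • g2 = 0 := by
    have h6 : ((b + a : ℕ) : ℤ) • g2 = 0 := by
      push_cast
      rw [add_smul]
      have h7 : ((a : ℤ) - a) • g1 = 0 := by rw [sub_self, zero_smul]
      rw [h7] at key
      rw [sub_smul, neg_smul] at key
      linear_combination (norm := abel) key
    rwa [natCast_zsmul] at h6
  have hdvd2 : m * n ∣ b + a := by
    rw [← hg2]
    exact addOrderOf_dvd_iff_nsmul_eq_zero.2 hsum2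
  obtain ⟨k, hk⟩ := hdvd2
  have hk2 : k ≤ 1 := by
    by_contra hk2
    have h8 : m * n * 2 ≤ m * n * k := Nat.mul_le_mul_left _ (by omega)
    omega
  interval_cases k <;> omega
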